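/- Assume both the β-strong P-order and the γ-strong C-order assumptions hold for some β > 0 and γ > 0. Then every Greedy-Local matching M' satisfies w(M) ≤ min{1+β, max{1, β+γ}}·w(M') for every matching M of the instance. -/
import Mathlib


/-- A matching of a bipartite instance with edge set `E ⊆ P × C`. -/
def IsBipMatching {s q : ℕ} (E M : Finset (Fin s × Fin q)) : Prop :=
  M ⊆ E ∧ ∀ e₁ ∈ M, ∀ e₂ ∈ M, e₁ ≠ e₂ → e₁.1 ≠ e₂.1 ∧ e₁.2 ≠ e₂.2

/-- The β-strong P-order assumption. -/
def StrongPOrder {s q : ℕ} (E : Finset (Fin s × Fin q)) (w : Fin s × Fin q → ℝ)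
    (β : ℝ) : Prop :=
  ∀ i j : Fin s, i < j → ∀ c : Fin q, (i, c) ∈ E → (j, c) ∈ E → w (j, c) ≤ β * w (i, c)

/-- The γ-strong C-order assumption. -/
def StrongCOrder {s q : ℕ} (E : Finset (Fin s × Fin q)) (w : Fin s × Fin q → ℝ)
    (γ : ℝ) : Prop :=
  ∀ i j : Fin q, i < j → ∀ p : Fin s, (p, i) ∈ E → (p, j) ∈ E → w (p, j) ≤ γ * w (p, i)

/-- A Greedy-Local matching. -/
def GreedyLocal {s q : ℕ} (E : Finset (Fin s × Fin q)) (w : Fin s × Fin q → ℝ)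
    (M' : Finset (Fin s × Fin q)) : Prop :=
  IsBipMatching E M' ∧ ∀ e ∈ E, e ∉ M' →
    (∃ i : Fin s, i < e.1 ∧ (i, e.2) ∈ M') ∨
    (∃ c' : Fin q, (e.1, c') ∈ M' ∧ w e ≤ w (e.1, c'))

open Classical in
noncomputable def chargeMap {s q : ℕ} (w : Fin s × Fin q → ℝ)
    (M' : Finset (Fin s × Fin q)) (e : Fin s × Fin q) : Fin s × Fin q :=
  if e ∈ M' then e
  else if h2 : ∃ i, i < e.1 ∧ (i, e.2) ∈ M' then (h2.choose, e.2)
  else if h3 : ∃ c', (e.1, c') ∈ M' ∧ w e ≤ w (e.1, c') then (e.1, h3.choose) else e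

lemma chargeMap_self {s q : ℕ} (w : Fin s × Fin q → ℝ) (M' : Finset (Fin s × Fin q))
    (e : Fin s × Fin q) (h : e ∈ M') : chargeMap w M' e = e := by
  unfold chargeMap; rw [if_pos h]

lemma chargeMap_spec {s q : ℕ} (w : Fin s × Fin q → ℝ) (M' : Finset (Fin s × Fin q))
    (e : Fin s × Fin q) (h : e ∉ M')
    (hgl : (∃ i, i < e.1 ∧ (i, e.2) ∈ M') ∨ ∃ c', (e.1, c') ∈ M' ∧ w e ≤ w (e.1, c')) :
    chargeMap w M' e ∈ M' ∧
      (((chargeMap w M' e).2 = e.2 ∧ (chargeMap w M' e).1 < e.1) ∨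
       ((chargeMap w M' e).1 = e.1 ∧ w e ≤ w (chargeMap w M' e))) := by
  unfold chargeMap
  rw [if_neg h]
  split_ifs with h2 h3
  · exact ⟨h2.choose_spec.2, Or.inl ⟨rfl, h2.choose_spec.1⟩⟩
  · exact ⟨h3.choose_spec.1, Or.inr ⟨rfl, h3.choose_spec.2⟩⟩
  · rcases hgl with hg | hg
    · exact absurd hg h2
    · exact absurd hg h3

lemma sum_le_of_subsingleton' {ι : Type*} (S : Finset ι) (w : ι → ℝ) (K : ℝ) (hK : 0 ≤ K)
    (huniq : ∀ a ∈ S, ∀ b ∈ S, a = b) (hb : ∀ a ∈ S, w a ≤ K) : ∑ a ∈ S, w a ≤ K := by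
  rcases S.eq_empty_or_nonempty with rfl | ⟨a, ha⟩
  · simpa using hK
  · have hS : S = {a} := Finset.eq_singleton_iff_unique_mem.2 ⟨ha, fun b hb' => huniq b hb' a ha⟩
    rw [hS, Finset.sum_singleton]; exact hb a ha

lemma charge_bound {s q : ℕ} (E : Finset (Fin s × Fin q)) (w : Fin s × Fin q → ℝ)
    (hw : ∀ e ∈ E, 0 < w e) (β δ : ℝ) (hβ : 0 ≤ β) (hδ : 0 ≤ δ)
    (hordP : StrongPOrder E w β)
    (M' : Finset (Fin s × Fin q)) (hM' : GreedyLocal E w M')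
    (M : Finset (Fin s × Fin q)) (hM : IsBipMatching E M)
    (hδb : ∀ e ∈ M, e ∉ M' → ∀ c', (e.1, c') ∈ M' → w e ≤ w (e.1, c') →
      w e ≤ δ * w (e.1, c')) :
    ∑ e ∈ M, w e ≤ max 1 (β + δ) * ∑ e ∈ M', w e := by
  classical
  set φ := chargeMap w M' with hφdef
  have hgl : ∀ e ∈ M, e ∉ M' →
      (∃ i, i < e.1 ∧ (i, e.2) ∈ M') ∨ ∃ c', (e.1, c') ∈ M' ∧ w e ≤ w (e.1, c') :=
    fun e he hne => hM'.2 e (hM.1 he) hne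
  have hmaps : ∀ e ∈ M, φ e ∈ M' := by
    intro e he
    by_cases hne : e ∈ M'
    · rw [hφdef, chargeMap_self _ _ _ hne]; exact hne
    · exact (chargeMap_spec _ _ _ hne (hgl e he hne)).1
  have huniq1 : ∀ e₁ ∈ M, ∀ e₂ ∈ M, e₁.1 = e₂.1 → e₁ = e₂ := by
    intro e₁ h1 e₂ h2 hh; by_contra hne'; exact (hM.2 e₁ h1 e₂ h2 hne').1 hh
  have huniq2 : ∀ e₁ ∈ M, ∀ e₂ ∈ M, e₁.2 = e₂.2 → e₁ = e₂ := by
    intro e₁ h1 e₂ h2 hh; by_contra hne'; exact (hM.2 e₁ h1 e₂ h2 hne').2 hh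
  rw [← Finset.sum_fiberwise_of_maps_to hmaps w, Finset.mul_sum]
  apply Finset.sum_le_sum
  intro f hf
  have hfE : f ∈ E := hM'.1.1 hf
  have hwf : 0 < w f := hw f hfE
  by_cases hfM : f ∈ M
  · have hfib : M.filter (fun e => φ e = f) = {f} := by
      apply Finset.eq_singleton_iff_unique_mem.2
      refine ⟨Finset.mem_filter.2 ⟨hfM, by rw [hφdef, chargeMap_self _ _ _ hf]⟩, ?_⟩
      intro e he
      obtain ⟨heM, heq⟩ := Finset.mem_filter.1 he
      by_cases hne : e ∈ M'
      · rw [hφdef, chargeMap_self _ _ _ hne] at heq; exact heq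
      · rcases (chargeMap_spec w M' e hne (hgl e heM hne)).2 with ⟨h2, _⟩ | ⟨h1, _⟩
        · rw [show chargeMap w M' e = f from heq] at h2
          exact absurd ((huniq2 e heM f hfM h2.symm) ▸ hf) hne
        · rw [show chargeMap w M' e = f from heq] at h1
          exact absurd ((huniq1 e heM f hfM h1.symm) ▸ hf) hne
    rw [hfib, Finset.sum_singleton]
    have h1 : (1:ℝ) ≤ max 1 (β + δ) := le_max_left _ _
    nlinarith
  · set F := M.filter (fun e => φ e = f) with hF
    have hFspec : ∀ e ∈ F, e ∈ M ∧ φ e = f := fun e he => Finset.mem_filter.1 he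
    have hFne : ∀ e ∈ F, e ∉ M' := by
      intro e he hcon
      obtain ⟨heM, heq⟩ := hFspec e he
      rw [hφdef, chargeMap_self _ _ _ hcon] at heq
      exact hfM (heq ▸ heM)
    have hcover : F ⊆ F.filter (fun e => e.2 = f.2) ∪ F.filter (fun e => e.1 = f.1) := by
      intro e he
      obtain ⟨heM, heq⟩ := hFspec e he
      rcases (chargeMap_spec w M' e (hFne e he) (hgl e heM (hFne e he))).2 with
        ⟨h2, _⟩ | ⟨h1, _⟩
      · rw [show chargeMap w M' e = f from heq] at h2
        exact Finset.mem_union_left _ (Finset.mem_filter.2 ⟨he, h2.symm⟩)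
      · rw [show chargeMap w M' e = f from heq] at h1
        exact Finset.mem_union_right _ (Finset.mem_filter.2 ⟨he, h1.symm⟩)
    have hsum1 : ∑ e ∈ F.filter (fun e => e.2 = f.2), w e ≤ β * w f := by
      apply sum_le_of_subsingleton' _ _ _ (mul_nonneg hβ hwf.le)
      · intro a ha b hb
        obtain ⟨haF, ha2⟩ := Finset.mem_filter.1 ha
        obtain ⟨hbF, hb2⟩ := Finset.mem_filter.1 hb
        exact huniq2 a (hFspec a haF).1 b (hFspec b hbF).1 (ha2.trans hb2.symm)
      · intro e he
        obtain ⟨heF, he2⟩ := Finset.mem_filter.1 he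
        obtain ⟨heM, heq⟩ := hFspec e heF
        have hne := hFne e heF
        rcases (chargeMap_spec w M' e hne (hgl e heM hne)).2 with ⟨_, hlt⟩ | ⟨h1, _⟩
        · rw [show chargeMap w M' e = f from heq] at hlt
          have hfe : f = (f.1, e.2) := Prod.ext rfl he2.symm
          have := hordP f.1 e.1 hlt e.2 (by rw [← hfe]; exact hfE)
            (by simpa using hM.1 heM)
          simpa [← hfe] using this
        · rw [show chargeMap w M' e = f from heq] at h1
          exfalso
          have : e = f := Prod.ext h1.symm he2
          exact hfM (this ▸ heM)
    have hsum2 : ∑ e ∈ F.filter (fun e => e.1 = f.1), w e ≤ δ * w f := by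
      apply sum_le_of_subsingleton' _ _ _ (mul_nonneg hδ hwf.le)
      · intro a ha b hb
        obtain ⟨haF, ha1⟩ := Finset.mem_filter.1 ha
        obtain ⟨hbF, hb1⟩ := Finset.mem_filter.1 hb
        exact huniq1 a (hFspec a haF).1 b (hFspec b hbF).1 (ha1.trans hb1.symm)
      · intro e he
        obtain ⟨heF, he1⟩ := Finset.mem_filter.1 he
        obtain ⟨heM, heq⟩ := hFspec e heF
        have hne := hFne e heF
        rcases (chargeMap_spec w M' e hne (hgl e heM hne)).2 with ⟨h2, _⟩ | ⟨_, hle⟩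
        · rw [show chargeMap w M' e = f from heq] at h2
          exfalso
          have : e = f := Prod.ext he1 h2.symm
          exact hfM (this ▸ heM)
        · rw [show chargeMap w M' e = f from heq] at hle
          have hfe : f = (e.1, f.2) := Prod.ext he1.symm rfl
          have := hδb e heM hne f.2 (by rw [← hfe]; exact hf) (by rw [← hfe]; exact hle)
          rwa [← hfe] at this
    have hnonneg : ∀ e ∈ F.filter (fun e => e.2 = f.2) ∪ F.filter (fun e => e.1 = f.1),
        0 ≤ w e := by
      intro e he
      rcases Finset.mem_union.1 he with h | h
      · exact (hw e (hM.1 (hFspec e (Finset.mem_filter.1 h).1).1)).le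
      · exact (hw e (hM.1 (hFspec e (Finset.mem_filter.1 h).1).1)).le
    calc ∑ e ∈ F, w e
        ≤ ∑ e ∈ F.filter (fun e => e.2 = f.2) ∪ F.filter (fun e => e.1 = f.1), w e :=
          Finset.sum_le_sum_of_subset_of_nonneg hcover (fun e he _ => hnonneg e he)
      _ ≤ ∑ e ∈ F.filter (fun e => e.2 = f.2), w e
            + ∑ e ∈ F.filter (fun e => e.1 = f.1), w e := by
          have h1 := Finset.sum_union_inter (s₁ := F.filter (fun e => e.2 = f.2))
            (s₂ := F.filter (fun e => e.1 = f.1)) (f := w)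
          have h2 : 0 ≤ ∑ e ∈ F.filter (fun e => e.2 = f.2) ∩ F.filter (fun e => e.1 = f.1),
              w e := Finset.sum_nonneg (fun e he => by
                exact (hw e (hM.1 (hFspec e (Finset.mem_filter.1 (Finset.mem_inter.1 he).1).1).1)).le)
          linarith
      _ ≤ β * w f + δ * w f := add_le_add hsum1 hsum2
      _ = (β + δ) * w f := by ring
      _ ≤ max 1 (β + δ) * w f := mul_le_mul_of_nonneg_right (le_max_right _ _) hwf.le

/-- Under both the β-strong P-order and the γ-strong C-order assumptions,
the Greedy-Local algorithm is min{1+β, max{1, β+γ}}-approximate. -/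
theorem stmt3 {s q : ℕ} (E : Finset (Fin s × Fin q)) (w : Fin s × Fin q → ℝ)
    (hw : ∀ e ∈ E, 0 < w e) (β γ : ℝ) (hβ : 0 < β) (hγ : 0 < γ)
    (hordP : StrongPOrder E w β) (hordC : StrongCOrder E w γ)
    (M' : Finset (Fin s × Fin q)) (hM' : GreedyLocal E w M')
    (M : Finset (Fin s × Fin q)) (hM : IsBipMatching E M) :
    ∑ e ∈ M, w e ≤ min (1 + β) (max 1 (β + γ)) * ∑ e ∈ M', w e := by
  have A := charge_bound E w hw β 1 hβ.le zero_le_one hordP M' hM' M hM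
    (fun e _ _ c' _ hle => by simpa using hle)
  have hδγ : ∀ e ∈ M, e ∉ M' → ∀ c', (e.1, c') ∈ M' → w e ≤ w (e.1, c') →
      w e ≤ γ * w (e.1, c') := by
    intro e heM heM' c' hc'M' hle
    have heE : e ∈ E := hM.1 heM
    have hcE : (e.1, c') ∈ E := hM'.1.1 hc'M'
    have hne : e.2 ≠ c' := by
      intro h
      apply heM'
      have : e = (e.1, c') := Prod.ext rfl h
      rw [this]; exact hc'M'
    rcases lt_or_gt_of_ne hne with hlt | hgt
    · have h1 : w (e.1, c') ≤ γ * w (e.1, e.2) :=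
        hordC e.2 c' hlt e.1 (by simpa using heE) hcE
      rw [Prod.mk.eta] at h1
      have hwe : 0 < w e := hw e heE
      nlinarith [mul_nonneg hγ.le (sub_nonneg.2 hle)]
    · have h1 : w (e.1, e.2) ≤ γ * w (e.1, c') :=
        hordC c' e.2 hgt e.1 hcE (by simpa using heE)
      rwa [Prod.mk.eta] at h1
  have B := charge_bound E w hw β γ hβ.le hγ.le hordP M' hM' M hM hδγ
  have hmax1 : max 1 (β + 1) = 1 + β := by
    rw [max_eq_right (by linarith)]; ring
  rcases le_total (1 + β) (max 1 (β + γ)) with h | h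
  · rw [min_eq_left h]; rwa [hmax1] at A
  · rw [min_eq_right h]; exact B
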